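/- Let r ≥ 2 and d ≥ 1 be integers with 10·d·log₂ r < r. Then a uniformly random function F : {0,1}^r → {0,1} satisfies Pr_F[ pdeg_{1/10}(F) ≤ d ] < 1/10. -/

import Mathlib

open scoped Classical

noncomputable def evalBool {ι : Type} (a : ι → Bool) (P : MvPolynomial ι ℝ) : ℝ :=
  MvPolynomial.eval (fun i => if a i then (1:ℝ) else 0) P

def HasProbPoly {ι : Type} (f : (ι → Bool) → Bool) (ε : ℝ) (d : ℕ) : Prop :=
  ∃ (k : ℕ) (w : Fin k → ℝ) (P : Fin k → MvPolynomial ι ℝ),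
    (∀ i, 0 ≤ w i) ∧ (∑ i, w i = 1) ∧ (∀ i, (P i).totalDegree ≤ d) ∧
    ∀ a : ι → Bool,
      ∑ i ∈ Finset.univ.filter
          (fun i => evalBool a (P i) ≠ (if f a then (1:ℝ) else 0)), w i ≤ ε

noncomputable def pdeg {ι : Type} (ε : ℝ) (f : (ι → Bool) → Bool) : ℕ :=
  sInf {d | HasProbPoly f ε d}

def TrulyVariate {ι : Type} (f : (ι → Bool) → Bool) : Prop :=
  ∀ i : ι, ∃ a, f (Function.update a i (!(a i))) ≠ f a

def ORf (n : ℕ) : (Fin n → Bool) → Bool := fun a => decide (∃ i, a i = true)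

noncomputable def sensitivity {n : ℕ} (f : (Fin n → Bool) → Bool) : ℕ :=
  Finset.univ.sup (fun a : Fin n → Bool =>
    (Finset.univ.filter (fun i : Fin n => f (Function.update a i (!(a i))) ≠ f a)).card)

lemma card_finset_card_le (X : Type*) [Fintype X] (k : ℕ) :
    Fintype.card {B : Finset X // B.card ≤ k} ≤ (Fintype.card X + 1) ^ k := by
  classical
  have hcard : Fintype.card (Fin k → Option X) = (Fintype.card X + 1) ^ k := by
    simp [Fintype.card_option]
  rw [← hcard]
  apply Fintype.card_le_of_injective (fun B => fun i : Fin k => B.1.toList[(i : ℕ)]?)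
  intro B B' hBB'
  have hlist : B.1.toList = B'.1.toList := by
    apply List.ext_getElem?
    intro n
    by_cases hn : n < k
    · exact congrFun hBB' ⟨n, hn⟩
    · have h1 : B.1.toList[n]? = none := by
        rw [List.getElem?_eq_none_iff, Finset.length_toList]; omega
      have h2 : B'.1.toList[n]? = none := by
        rw [List.getElem?_eq_none_iff, Finset.length_toList]; omega
      rw [h1, h2]
  have : B.1 = B'.1 := by
    rw [← Finset.toList_toFinset B.1, ← Finset.toList_toFinset B'.1, hlist]
  exact Subtype.ext this

lemma choose_mono_of_le_half {N : ℕ} : ∀ {t : ℕ}, 2 * t ≤ N → ∀ k ≤ t, N.choose k ≤ N.choose t := by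
  intro t
  induction t with
  | zero =>
    intro _ k hk
    have : k = 0 := by omega
    simp [this]
  | succ t ih =>
    intro ht k hk
    rcases Nat.lt_or_ge k (t+1) with hlt | hge
    · have h1 : N.choose k ≤ N.choose t := ih (by omega) k (by omega)
      have h2 : N.choose t ≤ N.choose (t+1) := by
        have heq := Nat.choose_succ_right_eq N t
        have hNt : N - t ≥ t + 1 := by omega
        have : N.choose (t+1) * (t+1) ≥ N.choose t * (t+1) := by
          calc N.choose t * (t+1) ≤ N.choose t * (N - t) := by
                exact Nat.mul_le_mul_left _ hNt
            _ = N.choose (t+1) * (t+1) := heq.symm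
        exact Nat.le_of_mul_le_mul_right this (by omega)
      exact h1.trans h2
    · have : k = t + 1 := by omega
      simp [this]

lemma four_mul_choose_le {N k : ℕ} (h : 5 * k + 4 ≤ N) :
    4 * N.choose k ≤ N.choose (k + 1) := by
  have heq := Nat.choose_succ_right_eq N k
  have hNk : N - k ≥ 4 * (k + 1) := by omega
  have : (4 * N.choose k) * (k+1) ≤ N.choose (k+1) * (k+1) := by
    calc (4 * N.choose k) * (k+1) = N.choose k * (4 * (k+1)) := by ring
      _ ≤ N.choose k * (N - k) := Nat.mul_le_mul_left _ hNk
      _ = N.choose (k+1) * (k+1) := heq.symm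
  exact Nat.le_of_mul_le_mul_right this (by omega)

lemma four_pow_mul_choose {N t : ℕ} (ht : 10 * t ≤ N) : 4 ^ t * N.choose t ≤ 2 ^ N := by
  have key : ∀ i ≤ t, 4 ^ i * N.choose t ≤ N.choose (t + i) := by
    intro i
    induction i with
    | zero => simp
    | succ i ih =>
      intro hi
      have h1 : 4 ^ i * N.choose t ≤ N.choose (t + i) := ih (by omega)
      have h2 : 4 * N.choose (t + i) ≤ N.choose (t + i + 1) := by
        apply four_mul_choose_le; omega
      calc 4 ^ (i+1) * N.choose t = 4 * (4 ^ i * N.choose t) := by ring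
        _ ≤ 4 * N.choose (t + i) := by omega
        _ ≤ N.choose (t + i + 1) := h2
        _ = N.choose (t + (i+1)) := by ring_nf
  have h2t : N.choose (2 * t) ≤ 2 ^ N := by
    rw [← Nat.sum_range_choose N]
    apply Finset.single_le_sum (f := fun m => N.choose m)
    · intro i _; exact Nat.zero_le _
    · exact Finset.mem_range.mpr (by omega)
  calc 4 ^ t * N.choose t ≤ N.choose (t + t) := key t le_rfl
    _ = N.choose (2 * t) := by ring_nf
    _ ≤ 2 ^ N := h2t

lemma hasProbPoly_mono {ι : Type} {f : (ι → Bool) → Bool} {ε : ℝ} {d d' : ℕ}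
    (hdd' : d ≤ d') (h : HasProbPoly f ε d) : HasProbPoly f ε d' := by
  obtain ⟨k, w, P, h1, h2, h3, h4⟩ := h
  exact ⟨k, w, P, h1, h2, fun i => (h3 i).trans hdd', h4⟩

/-- Every Boolean function has an exact polynomial representation. -/
lemma exists_exact_poly {ι : Type} [Fintype ι] (f : (ι → Bool) → Bool) :
    ∃ P : MvPolynomial ι ℝ, ∀ a, evalBool a P = (if f a then (1:ℝ) else 0) := by
  classical
  refine ⟨∑ b ∈ Finset.univ.filter (fun b => f b = true),
      ∏ i : ι, (if b i then MvPolynomial.X i else 1 - MvPolynomial.X i), ?_⟩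
  intro a
  have hQ : ∀ b : ι → Bool,
      evalBool a (∏ i : ι, (if b i then MvPolynomial.X i else 1 - MvPolynomial.X i))
        = (if b = a then (1:ℝ) else 0) := by
    intro b
    unfold evalBool
    rw [map_prod]
    have hfac : ∀ i : ι,
        MvPolynomial.eval (fun i => if a i then (1:ℝ) else 0)
          (if b i then MvPolynomial.X i else 1 - MvPolynomial.X i)
        = (if b i = a i then (1:ℝ) else 0) := by
      intro i
      cases hb : b i <;> cases ha : a i <;> simp [hb, ha]
    rw [Finset.prod_congr rfl (fun i _ => hfac i)]
    by_cases hba : b = a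
    · subst hba; simp
    · obtain ⟨i, hi⟩ : ∃ i, b i ≠ a i := by
        by_contra hc
        push_neg at hc
        exact hba (funext hc)
      rw [if_neg hba]
      exact Finset.prod_eq_zero (Finset.mem_univ i) (by simp [hi])
  unfold evalBool
  rw [map_sum]
  have : ∀ b ∈ Finset.univ.filter (fun b => f b = true),
      MvPolynomial.eval (fun i => if a i then (1:ℝ) else 0)
        (∏ i : ι, (if b i then MvPolynomial.X i else 1 - MvPolynomial.X i))
      = (if b = a then (1:ℝ) else 0) := fun b _ => hQ b
  rw [Finset.sum_congr rfl this, Finset.sum_ite_eq' _ a (fun _ => (1:ℝ))]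
  by_cases hfa : f a = true <;> simp [hfa]

lemma hasProbPoly_of_pdeg_le {ι : Type} [Fintype ι] {f : (ι → Bool) → Bool} {d : ℕ}
    (h : pdeg (1/10) f ≤ d) : HasProbPoly f (1/10) d := by
  classical
  have hne : {n | HasProbPoly f (1/10) n}.Nonempty := by
    obtain ⟨P, hP⟩ := exists_exact_poly f
    refine ⟨P.totalDegree, 1, fun _ => 1, fun _ => P, fun _ => zero_le_one, by simp, fun _ => le_rfl, ?_⟩
    intro a
    have : (Finset.univ.filter fun i : Fin 1 =>
        evalBool a ((fun _ => P) i) ≠ (if f a then (1:ℝ) else 0)) = ∅ := by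
      apply Finset.filter_false_of_mem
      intro i _
      simp [hP a]
    rw [this]
    norm_num
  have hmem : HasProbPoly f (1/10) (pdeg (1/10) f) := Nat.sInf_mem hne
  exact hasProbPoly_mono h hmem

/-- Averaging: a single polynomial with few errors. -/
lemma exists_good_poly {r : ℕ} {f : (Fin r → Bool) → Bool} {d : ℕ}
    (h : HasProbPoly f (1/10) d) :
    ∃ P : MvPolynomial (Fin r) ℝ, P.totalDegree ≤ d ∧
      10 * (Finset.univ.filter
        (fun a : Fin r → Bool => evalBool a P ≠ (if f a then (1:ℝ) else 0))).card
        ≤ 2 ^ r := by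
  classical
  obtain ⟨k, w, P, hw0, hw1, hdeg, herr⟩ := h
  have hk : k ≠ 0 := by
    rintro rfl
    simp at hw1
  set E : Fin k → Finset (Fin r → Bool) :=
    fun i => Finset.univ.filter (fun a => evalBool a (P i) ≠ (if f a then (1:ℝ) else 0)) with hE
  have key : ∑ i, w i * ((E i).card : ℝ) ≤ (Fintype.card (Fin r → Bool) : ℝ) * (1/10) := by
    have h1 : ∀ i, w i * ((E i).card : ℝ) = ∑ a : Fin r → Bool,
        (if a ∈ E i then w i else 0) := by
      intro i
      rw [Finset.sum_ite_mem, Finset.univ_inter, Finset.sum_const, nsmul_eq_mul, mul_comm]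
    rw [Finset.sum_congr rfl (fun i _ => h1 i), Finset.sum_comm]
    have h2 : ∀ a : Fin r → Bool, ∑ i, (if a ∈ E i then w i else 0) ≤ 1/10 := by
      intro a
      have : ∑ i, (if a ∈ E i then w i else 0)
          = ∑ i ∈ Finset.univ.filter (fun i => a ∈ E i), w i := by
        rw [Finset.sum_filter]
      rw [this]
      have hfe : (Finset.univ.filter (fun i => a ∈ E i))
          = Finset.univ.filter (fun i => evalBool a (P i) ≠ (if f a then (1:ℝ) else 0)) := by
        apply Finset.filter_congr
        intro i _
        simp [hE]
      rw [hfe]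
      exact herr a
    calc ∑ a : Fin r → Bool, ∑ i, (if a ∈ E i then w i else 0)
        ≤ ∑ a : Fin r → Bool, (1/10 : ℝ) := Finset.sum_le_sum (fun a _ => h2 a)
      _ = (Fintype.card (Fin r → Bool) : ℝ) * (1/10) := by
          rw [Finset.sum_const, nsmul_eq_mul, Fintype.card]
  obtain ⟨i₀, -, hmin⟩ := Finset.exists_min_image Finset.univ (fun i => (E i).card)
    ⟨⟨0, Nat.pos_of_ne_zero hk⟩, Finset.mem_univ _⟩
  have hlow : ((E i₀).card : ℝ) ≤ (Fintype.card (Fin r → Bool) : ℝ) * (1/10) := by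
    have : ((E i₀).card : ℝ) = ∑ i, w i * ((E i₀).card : ℝ) := by
      rw [← Finset.sum_mul, hw1, one_mul]
    rw [this]
    refine le_trans (Finset.sum_le_sum (fun i _ => ?_)) key
    exact mul_le_mul_of_nonneg_left (Nat.cast_le.mpr (hmin i (Finset.mem_univ i))) (hw0 i)
  refine ⟨P i₀, hdeg i₀, ?_⟩
  have : (10 * (E i₀).card : ℝ) ≤ (Fintype.card (Fin r → Bool) : ℝ) := by
    rw [mul_comm]
    calc ((E i₀).card : ℝ) * 10 ≤ ((Fintype.card (Fin r → Bool) : ℝ) * (1/10)) * 10 := by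
          exact mul_le_mul_of_nonneg_right hlow (by norm_num)
      _ = (Fintype.card (Fin r → Bool) : ℝ) := by ring
  have hgoal : (Finset.univ.filter
      (fun a : Fin r → Bool => evalBool a (P i₀) ≠ (if f a then (1:ℝ) else 0))) = E i₀ := rfl
  rw [hgoal]
  have hc2 : Fintype.card (Fin r → Bool) = 2 ^ r := by
    simp [Fintype.card_fun]
  rw [← hc2]
  exact_mod_cast this

lemma span_pattern {J X : Type*} [Fintype J] (u : X → (J → ℝ)) (p : J → ℝ) (x : X) :
    (∑ j, u x j * p j = 0) ↔
      u x ∈ Submodule.span ℝ (u '' {a : X | ∑ j, u a j * p j = 0}) := by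
  constructor
  · intro hx
    exact Submodule.subset_span ⟨x, hx, rfl⟩
  · intro hx
    let φ : (J → ℝ) →ₗ[ℝ] ℝ :=
      { toFun := fun w => ∑ j, w j * p j
        map_add' := by intro w₁ w₂; simp [add_mul, Finset.sum_add_distrib]
        map_smul' := by intro c w; simp [Finset.mul_sum, mul_assoc] }
    have hker : Submodule.span ℝ (u '' {a : X | ∑ j, u a j * p j = 0})
        ≤ LinearMap.ker φ := by
      rw [Submodule.span_le]
      rintro _ ⟨a, ha, rfl⟩
      simpa [φ, LinearMap.mem_ker] using ha
    have := hker hx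
    simpa [φ, LinearMap.mem_ker] using this

lemma exists_small_spanning {J X : Type*} [Fintype J] (u : X → (J → ℝ)) (S : Set X) :
    ∃ B : Finset X, B.card ≤ Fintype.card J ∧
      Submodule.span ℝ (u '' ↑B) = Submodule.span ℝ (u '' S) ∧ ↑B ⊆ S := by
  classical
  obtain ⟨b, hb_sub, hb_span, hb_li⟩ := exists_linearIndependent ℝ (u '' S)
  have hfin : b.Finite := hb_li.setFinite
  have hchoose : ∀ w ∈ hfin.toFinset, ∃ a, a ∈ S ∧ u a = w := by
    intro w hw
    rw [Set.Finite.mem_toFinset] at hw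
    obtain ⟨a, ha, rfl⟩ := hb_sub hw
    exact ⟨a, ha, rfl⟩
  set B : Finset X := hfin.toFinset.attach.image
    (fun w => Classical.choose (hchoose w.1 w.2)) with hB
  have hBS : (B : Set X) ⊆ S := by
    intro x hx
    simp only [hB, Finset.coe_image, Set.mem_image] at hx
    obtain ⟨w, -, rfl⟩ := hx
    exact (Classical.choose_spec (hchoose w.1 w.2)).1
  have hbB : b ⊆ u '' ↑B := by
    intro w hw
    have hw' : w ∈ hfin.toFinset := hfin.mem_toFinset.mpr hw
    refine ⟨Classical.choose (hchoose w hw'), ?_, (Classical.choose_spec (hchoose w hw')).2⟩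
    simp only [hB, Finset.coe_image, Set.mem_image]
    exact ⟨⟨w, hw'⟩, by simp, rfl⟩
  have hspan : Submodule.span ℝ (u '' ↑B) = Submodule.span ℝ (u '' S) := by
    apply le_antisymm
    · exact Submodule.span_mono (Set.image_mono hBS)
    · rw [← hb_span]
      exact Submodule.span_mono hbB
  have hcard : B.card ≤ Fintype.card J := by
    have h1 : B.card ≤ hfin.toFinset.card := by
      calc B.card ≤ hfin.toFinset.attach.card := Finset.card_image_le
        _ = hfin.toFinset.card := Finset.card_attach
    have hli2 : LinearIndependent ℝ (fun x : hfin.toFinset => (x : J → ℝ)) := by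
      have : LinearIndependent ℝ (fun x : (hfin.toFinset : Set (J → ℝ)) => (x : J → ℝ)) := by
        rw [Set.Finite.coe_toFinset]
        exact hb_li
      exact this
    have h2 := hli2.finset_card_le_finrank
    have h3 : Module.finrank ℝ (J → ℝ) = Fintype.card J := Module.finrank_pi ℝ
    omega
  exact ⟨B, hcard, hspan, hBS⟩

noncomputable def uu (r d : ℕ) (a : Fin r → Bool) :
    Option {T : Finset (Fin r) // T.card ≤ d} → ℝ :=
  fun o => Option.elim o 1 (fun T => ∏ i ∈ T.1, (if a i then (1:ℝ) else 0))

lemma eval_expand {r d : ℕ} (P : MvPolynomial (Fin r) ℝ) (hP : P.totalDegree ≤ d)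
    (a : Fin r → Bool) :
    evalBool a P = ∑ T : {T : Finset (Fin r) // T.card ≤ d},
      (∑ α ∈ P.support.filter (fun α => α.support = T.1), P.coeff α)
        * ∏ i ∈ T.1, (if a i then (1:ℝ) else 0) := by
  classical
  have hsupp : ∀ α ∈ P.support, α.support.card ≤ d := by
    intro α hα
    have h1 : α.support.card ≤ α.sum (fun _ n => n) := by
      rw [Finsupp.sum]
      calc α.support.card = ∑ _i ∈ α.support, 1 := by simp
        _ ≤ ∑ i ∈ α.support, α i := Finset.sum_le_sum (fun i hi => by
            have := Finsupp.mem_support_iff.mp hi; omega)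
    exact h1.trans ((MvPolynomial.le_totalDegree hα).trans hP)
  have hLHS : evalBool a P
      = ∑ α ∈ P.support, P.coeff α * ∏ i ∈ α.support, (if a i then (1:ℝ) else 0) := by
    unfold evalBool
    rw [MvPolynomial.eval_eq]
    apply Finset.sum_congr rfl
    intro α hα
    congr 1
    apply Finset.prod_congr rfl
    intro i hi
    have hne : α i ≠ 0 := Finsupp.mem_support_iff.mp hi
    cases h : a i
    · simp [zero_pow hne]
    · simp
  set g : (Fin r →₀ ℕ) → {T : Finset (Fin r) // T.card ≤ d} :=
    fun α => if h : α.support.card ≤ d then ⟨α.support, h⟩ else ⟨∅, by simp⟩ with hg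
  have hmaps : ∀ α ∈ P.support, g α ∈ (Finset.univ : Finset {T : Finset (Fin r) // T.card ≤ d}) :=
    fun _ _ => Finset.mem_univ _
  have hfib := Finset.sum_fiberwise_of_maps_to hmaps
      (fun α => P.coeff α * ∏ i ∈ α.support, (if a i then (1:ℝ) else 0))
  rw [hLHS, ← hfib]
  apply Finset.sum_congr rfl
  intro T _
  have hfil : P.support.filter (fun α => g α = T)
      = P.support.filter (fun α => α.support = T.1) := by
    apply Finset.filter_congr
    intro α hα
    have hcd := hsupp α hα
    simp [hg, dif_pos hcd, Subtype.ext_iff]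
  rw [hfil]
  have hin : ∀ α ∈ P.support.filter (fun α => α.support = T.1),
      P.coeff α * ∏ i ∈ α.support, (if a i then (1:ℝ) else 0)
        = P.coeff α * ∏ i ∈ T.1, (if a i then (1:ℝ) else 0) := by
    intro α hα
    rw [(Finset.mem_filter.mp hα).2]
  rw [Finset.sum_congr rfl hin, ← Finset.sum_mul]

lemma exists_encode {r d : ℕ} (f : (Fin r → Bool) → Bool) (hf : HasProbPoly f (1/10) d) :
    ∃ B D : Finset (Fin r → Bool),
      B.card ≤ Fintype.card {T : Finset (Fin r) // T.card ≤ d} + 1 ∧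
      10 * D.card ≤ 2 ^ r ∧
      ∀ a, f a = xor (decide (uu r d a ∈ Submodule.span ℝ (uu r d '' ↑B)))
        (decide (a ∈ D)) := by
  classical
  obtain ⟨P, hPd, hPerr⟩ := exists_good_poly hf
  set c : {T : Finset (Fin r) // T.card ≤ d} → ℝ :=
    fun T => ∑ α ∈ P.support.filter (fun α => α.support = T.1), P.coeff α with hcdef
  set p : Option {T : Finset (Fin r) // T.card ≤ d} → ℝ :=
    fun o => Option.elim o (-1) c with hpdef
  have hup : ∀ a, ∑ j, uu r d a j * p j = evalBool a P - 1 := by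
    intro a
    rw [Fintype.sum_option, eval_expand P hPd a]
    simp only [uu, hpdef, hcdef, Option.elim]
    have : ∑ T : {T : Finset (Fin r) // T.card ≤ d},
        (∏ i ∈ T.1, (if a i then (1:ℝ) else 0))
          * (∑ α ∈ P.support.filter (fun α => α.support = T.1), P.coeff α)
        = ∑ T : {T : Finset (Fin r) // T.card ≤ d},
        (∑ α ∈ P.support.filter (fun α => α.support = T.1), P.coeff α)
          * ∏ i ∈ T.1, (if a i then (1:ℝ) else 0) := by
      apply Finset.sum_congr rfl
      intros
      ring
    rw [this]
    ring
  obtain ⟨B, hBcard, hBspan, hBS⟩ := exists_small_spanning (uu r d)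
    {a : Fin r → Bool | ∑ j, uu r d a j * p j = 0}
  have hrecov : ∀ x, (evalBool x P = 1)
      ↔ (uu r d x ∈ Submodule.span ℝ (uu r d '' ↑B)) := by
    intro x
    rw [hBspan]
    have h1 : (evalBool x P = 1) ↔ (∑ j, uu r d x j * p j = 0) := by
      rw [hup x]
      constructor <;> intro <;> linarith
    rw [h1]
    exact span_pattern (uu r d) p x
  set gB : (Fin r → Bool) → Bool :=
    fun a => decide (uu r d a ∈ Submodule.span ℝ (uu r d '' ↑B)) with hgB
  set D := Finset.univ.filter (fun a => f a ≠ gB a) with hD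
  have hgB_iff : ∀ a, gB a = true ↔ evalBool a P = 1 := by
    intro a
    rw [hgB]
    simp [← hrecov a]
  have hDsub : D ⊆ Finset.univ.filter
      (fun a => evalBool a P ≠ (if f a then (1:ℝ) else 0)) := by
    intro a ha
    rw [hD, Finset.mem_filter] at ha
    rw [Finset.mem_filter]
    refine ⟨Finset.mem_univ _, ?_⟩
    intro heval
    apply ha.2
    cases hfa : f a
    · rw [hfa] at heval
      simp only [if_neg (by simp : ¬ (false = true))] at heval
      have h0 : ¬ (evalBool a P = 1) := by rw [heval]; norm_num
      have : gB a = false := by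
        cases hgb : gB a
        · rfl
        · exact absurd ((hgB_iff a).mp hgb) h0
      rw [this]
    · rw [hfa] at heval
      simp only [if_pos rfl] at heval
      exact ((hgB_iff a).mpr heval).symm
  refine ⟨B, D, ?_, ?_, ?_⟩
  · calc B.card ≤ Fintype.card (Option {T : Finset (Fin r) // T.card ≤ d}) := hBcard
      _ = Fintype.card {T : Finset (Fin r) // T.card ≤ d} + 1 := Fintype.card_option
  · refine le_trans (Nat.mul_le_mul_left 10 (Finset.card_le_card ?_)) hPerr
    intro a ha
    have ha' := hDsub ha
    rw [Finset.mem_filter] at ha' ⊢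
    exact ha'
  · intro a
    by_cases hfg : f a = gB a
    · have haD : a ∉ D := by simp [hD, hfg]
      simp [haD, hfg, hgB]
    · have haD : a ∈ D := by simp [hD]; exact hfg
      simp only [haD, decide_eq_true_eq]
      cases hf1 : f a <;> cases hg1 : gB a <;> simp_all

lemma card_finset_card_le_sum (X : Type*) [Fintype X] (t : ℕ)
    (h2t : 2 * t ≤ Fintype.card X) :
    Fintype.card {D : Finset X // D.card ≤ t} ≤ (t + 1) * (Fintype.card X).choose t := by
  classical
  rw [Fintype.card_subtype]
  have hsub : (Finset.univ.filter fun D : Finset X => D.card ≤ t)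
      ⊆ (Finset.range (t+1)).biUnion
        (fun k => Finset.univ.filter fun D : Finset X => D.card = k) := by
    intro D hD
    simp only [Finset.mem_filter, Finset.mem_univ, true_and] at hD
    simp only [Finset.mem_biUnion, Finset.mem_range, Finset.mem_filter, Finset.mem_univ,
      true_and]
    exact ⟨D.card, by omega, rfl⟩
  have h1 : (Finset.univ.filter fun D : Finset X => D.card ≤ t).card
      ≤ ∑ k ∈ Finset.range (t+1),
        (Finset.univ.filter fun D : Finset X => D.card = k).card :=
    le_trans (Finset.card_le_card hsub) (Finset.card_biUnion_le)
  have h2 : ∀ k, (Finset.univ.filter fun D : Finset X => D.card = k).card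
      = (Fintype.card X).choose k := by
    intro k
    have : (Finset.univ.filter fun D : Finset X => D.card = k)
        = Finset.powersetCard k Finset.univ := by
      rw [Finset.powersetCard_eq_filter, Finset.powerset_univ]
    rw [this, Finset.card_powersetCard, Finset.card_univ]
  calc (Finset.univ.filter fun D : Finset X => D.card ≤ t).card
      ≤ ∑ k ∈ Finset.range (t+1),
        (Finset.univ.filter fun D : Finset X => D.card = k).card := h1
    _ = ∑ k ∈ Finset.range (t+1), (Fintype.card X).choose k := by
        exact Finset.sum_congr rfl (fun k _ => h2 k)
    _ ≤ ∑ _k ∈ Finset.range (t+1), (Fintype.card X).choose t := by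
        apply Finset.sum_le_sum
        intro k hk
        exact choose_mono_of_le_half h2t k (by simp at hk; omega)
    _ = (t + 1) * (Fintype.card X).choose t := by
        rw [Finset.sum_const, Finset.card_range, smul_eq_mul]

theorem uniform_random_function_lower_bound (r d : ℕ) (hr : 2 ≤ r) (hd : 1 ≤ d)
    (h : 10 * (d : ℝ) * Real.logb 2 r < (r : ℝ)) :
    (Nat.card {F : (Fin r → Bool) → Bool // pdeg (1/10) F ≤ d} : ℝ)
      < (1/10) * 2 ^ (2 ^ r) := by
  classical
  -- basic log facts
  have hr0 : (0:ℝ) < (r:ℝ) := by positivity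
  have hlog1 : (1:ℝ) ≤ Real.logb 2 r := by
    have : Real.logb 2 2 ≤ Real.logb 2 r := by
      apply Real.logb_le_logb_of_le (by norm_num) (by norm_num)
      exact_mod_cast hr
    simpa using this
  have hd1 : (1:ℝ) ≤ (d:ℝ) := by exact_mod_cast hd
  have hr11 : 11 ≤ r := by
    have h10 : (10:ℝ) ≤ 10 * (d:ℝ) * Real.logb 2 r := by nlinarith
    have h' : (10:ℝ) < (r:ℝ) := lt_of_le_of_lt h10 h
    have : (10:ℕ) < r := by exact_mod_cast h'
    omega
  have hlog3 : (3:ℝ) ≤ Real.logb 2 r := by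
    have h8 : Real.logb 2 8 ≤ Real.logb 2 r := by
      apply Real.logb_le_logb_of_le (by norm_num) (by norm_num)
      exact_mod_cast (by omega : (8:ℕ) ≤ r)
    have : Real.logb 2 8 = 3 := by
      have : (8:ℝ) = 2 ^ (3:ℕ) := by norm_num
      rw [this, Real.logb_pow]
      simp
    linarith
  have hr31 : 31 ≤ r := by
    have h30 : (30:ℝ) ≤ 10 * (d:ℝ) * Real.logb 2 r := by nlinarith
    have h' : (30:ℝ) < (r:ℝ) := lt_of_le_of_lt h30 h
    have : (30:ℕ) < r := by exact_mod_cast h'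
    omega
  -- q and r^d < 2^q
  set q : ℕ := r / 10 + 1 with hq
  have hrq : (r:ℝ) / 10 < (q:ℕ) := by
    have : r < 10 * (r / 10) + 10 := by omega
    have h2 : (r:ℝ) < 10 * ((r/10 : ℕ) : ℝ) + 10 := by exact_mod_cast this
    have h3 : ((q:ℕ):ℝ) = ((r/10 : ℕ):ℝ) + 1 := by exact_mod_cast rfl
    rw [h3]
    linarith
  have hrd2q : r ^ d < 2 ^ q := by
    have hlt : (d:ℝ) * Real.logb 2 r < (q:ℝ) := by
      have : (d:ℝ) * Real.logb 2 r < (r:ℝ)/10 := by linarith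
      linarith
    have hlogpow : Real.logb 2 ((r:ℝ) ^ d) = (d:ℝ) * Real.logb 2 r := by
      rw [Real.logb_pow]
    have hpos : (0:ℝ) < (r:ℝ) ^ d := by positivity
    have hlt2 : (r:ℝ) ^ d < 2 ^ (q:ℝ) := by
      rw [← Real.logb_lt_iff_lt_rpow (by norm_num : (1:ℝ) < 2) hpos, hlogpow]
      exact hlt
    have hlt3 : (r:ℝ) ^ d < (2:ℝ) ^ (q:ℕ) := by
      rwa [Real.rpow_natCast] at hlt2
    exact_mod_cast hlt3
  -- abbreviations
  set N : ℕ := 2 ^ r with hN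
  set t : ℕ := N / 10 with ht
  set m : ℕ := Fintype.card {T : Finset (Fin r) // T.card ≤ d} with hmdef
  set K : ℕ := m + 1 with hK
  have h10t : 10 * t ≤ N := by
    rw [ht]; omega
  have h2t : 2 * t ≤ N := by omega
  -- the injection
  have hcount : Nat.card {F : (Fin r → Bool) → Bool // pdeg (1/10) F ≤ d}
      ≤ (N + 1) ^ K * ((t + 1) * N.choose t) := by
    have hfor : ∀ F : {F : (Fin r → Bool) → Bool // pdeg (1/10) F ≤ d},
        ∃ BD : {B : Finset (Fin r → Bool) // B.card ≤ K}
            × {D : Finset (Fin r → Bool) // D.card ≤ t},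
          ∀ a, F.1 a = xor (decide (uu r d a ∈ Submodule.span ℝ (uu r d '' ↑BD.1.1)))
            (decide (a ∈ BD.2.1)) := by
      intro F
      have hhp : HasProbPoly F.1 (1/10) d := hasProbPoly_of_pdeg_le F.2
      obtain ⟨B, D, hB, hD, hdec⟩ := exists_encode F.1 hhp
      refine ⟨(⟨B, ?_⟩, ⟨D, ?_⟩), hdec⟩
      · rwa [hK, hmdef]
      · rw [ht, hN]
        rw [Nat.le_div_iff_mul_le (by norm_num)]
        omega
    choose enc henc using hfor
    have hinj : Function.Injective enc := by
      intro F₁ F₂ heq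
      apply Subtype.ext
      funext a
      rw [henc F₁ a, henc F₂ a, heq]
    calc Nat.card {F : (Fin r → Bool) → Bool // pdeg (1/10) F ≤ d}
        ≤ Nat.card ({B : Finset (Fin r → Bool) // B.card ≤ K}
            × {D : Finset (Fin r → Bool) // D.card ≤ t}) :=
          Nat.card_le_card_of_injective enc hinj
      _ = Nat.card {B : Finset (Fin r → Bool) // B.card ≤ K}
            * Nat.card {D : Finset (Fin r → Bool) // D.card ≤ t} := Nat.card_prod _ _
      _ ≤ (N + 1) ^ K * ((t + 1) * N.choose t) := by
          have hcX : Fintype.card (Fin r → Bool) = N := by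
            rw [hN]; simp [Fintype.card_fun]
          apply Nat.mul_le_mul
          · rw [Nat.card_eq_fintype_card]
            have := card_finset_card_le (Fin r → Bool) K
            rwa [hcX] at this
          · rw [Nat.card_eq_fintype_card]
            have := card_finset_card_le_sum (Fin r → Bool) t (by rwa [hcX])
            rwa [hcX] at this
  -- numeric bound
  have hm_le : m ≤ (r + 1) ^ d := by
    have := card_finset_card_le (Fin r) d
    rwa [Fintype.card_fin] at this
  have hK2q : K ≤ 2 ^ (2 * q) := by
    have h1 : (r + 1) ^ d ≤ (r ^ 2) ^ d := by
      apply Nat.pow_le_pow_left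
      nlinarith
    have h2 : (r ^ 2) ^ d = (r ^ d) ^ 2 := by ring
    have h3 : (r ^ d) ^ 2 < (2 ^ q) ^ 2 := by
      apply Nat.pow_lt_pow_left hrd2q
      norm_num
    have h4 : (2 ^ q) ^ 2 = 2 ^ (2 * q) := by
      rw [← pow_mul]; ring_nf
    omega
  have hr2q : r + 1 ≤ 2 ^ (2 * q) := by
    have h1 : r + 1 ≤ r ^ 2 := by nlinarith
    have h2 : r ^ 2 ≤ (r ^ d) ^ 2 := by
      apply Nat.pow_le_pow_left
      exact Nat.le_self_pow (by omega) r
    have h3 : (r ^ d) ^ 2 < (2 ^ q) ^ 2 := by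
      apply Nat.pow_lt_pow_left hrd2q; norm_num
    have h4 : (2 ^ q) ^ 2 = 2 ^ (2 * q) := by rw [← pow_mul]; ring_nf
    omega
  have hrq' : r < 2 ^ q := by
    have : r ≤ r ^ d := Nat.le_self_pow (by omega) r
    omega
  -- exponent bound
  have hexp : 4 + (r + 1) * K + r ≤ 2 ^ (4 * q + 2) := by
    have h1 : (r + 1) * K ≤ 2 ^ (2*q) * 2 ^ (2*q) := Nat.mul_le_mul hr2q hK2q
    have h2 : 2 ^ (2*q) * 2 ^ (2*q) = 2 ^ (4*q) := by
      rw [← pow_add]; ring_nf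
    have h3 : 4 ≤ 2 ^ (2*q) := by
      calc (4:ℕ) = 2 ^ 2 := by norm_num
        _ ≤ 2 ^ (2*q) := Nat.pow_le_pow_right (by norm_num) (by omega)
    have h4 : r ≤ 2 ^ (2*q) := by
      have : 2 ^ q ≤ 2 ^ (2*q) := Nat.pow_le_pow_right (by norm_num) (by omega)
      omega
    have h5 : 2 ^ (2*q) + 2 ^ (4*q) + 2 ^ (2*q) ≤ 2 ^ (4*q+2) := by
      have ha : 2 ^ (2*q) ≤ 2 ^ (4*q) := Nat.pow_le_pow_right (by norm_num) (by omega)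
      have hb : 2 ^ (4*q+2) = 4 * 2 ^ (4*q) := by
        rw [pow_add]; ring
      omega
    omega
  have hqr : 4 * q + 2 ≤ r - 4 := by
    rw [hq]
    omega
  have ht_lb : 2 ^ (r - 3) ≤ 2 * t := by
    have h16 : 2 ^ (r-4) ≤ 2 ^ r / 16 := by
      have : 2 ^ r = 2 ^ (r-4) * 16 := by
        rw [show (16:ℕ) = 2^4 by norm_num, ← pow_add]
        congr 1
        omega
      omega
    have h1016 : 2 ^ r / 16 ≤ 2 ^ r / 10 := Nat.div_le_div_left (by norm_num) (by norm_num)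
    have : 2 ^ (r-4) ≤ t := by rw [ht, hN]; omega
    have h2 : 2 ^ (r-3) = 2 * 2 ^ (r-4) := by
      rw [← pow_succ']
      congr 1
      omega
    omega
  have hfinal : 10 * ((N + 1) ^ K * ((t + 1) * N.choose t)) < 2 ^ N := by
    have hC1 : 1 ≤ N.choose t := Nat.choose_pos (by omega)
    have hkey : 10 * (N + 1) ^ K * (t + 1) < 4 ^ t := by
      have b1 : (10:ℕ) ≤ 2 ^ 4 := by norm_num
      have b2 : (N + 1) ^ K ≤ 2 ^ ((r+1) * K) := by
        calc (N + 1) ^ K ≤ (2 ^ (r+1)) ^ K := by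
              apply Nat.pow_le_pow_left
              rw [hN]
              have : 1 ≤ 2 ^ r := Nat.one_le_two_pow
              rw [pow_succ]
              omega
          _ = 2 ^ ((r+1) * K) := by rw [← pow_mul]
      have b3 : t + 1 ≤ 2 ^ r := by
        have : t < N := by
          rw [ht]
          apply Nat.div_lt_self
          · rw [hN]; positivity
          · norm_num
        rw [hN] at this
        omega
      have hprod : 10 * (N + 1) ^ K * (t + 1) ≤ 2 ^ (4 + (r+1) * K + r) := by
        calc 10 * (N + 1) ^ K * (t + 1) ≤ 2 ^ 4 * 2 ^ ((r+1)*K) * 2 ^ r := by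
              apply Nat.mul_le_mul (Nat.mul_le_mul b1 b2) b3
          _ = 2 ^ (4 + (r+1)*K + r) := by rw [← pow_add, ← pow_add]
      have hexp2 : 4 + (r+1) * K + r < 2 * t := by
        have e1 : 4 + (r+1) * K + r ≤ 2 ^ (4*q+2) := hexp
        have e2 : 2 ^ (4*q+2) ≤ 2 ^ (r-4) := Nat.pow_le_pow_right (by norm_num) hqr
        have e3 : 2 ^ (r-4) < 2 ^ (r-3) := Nat.pow_lt_pow_right (by norm_num) (by omega)
        omega
      calc 10 * (N + 1) ^ K * (t + 1) ≤ 2 ^ (4 + (r+1)*K + r) := hprod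
        _ < 2 ^ (2 * t) := Nat.pow_lt_pow_right (by norm_num) hexp2
        _ = 4 ^ t := by rw [pow_mul]; norm_num
    have hchoose := four_pow_mul_choose (N := N) (t := t) h10t
    calc 10 * ((N + 1) ^ K * ((t + 1) * N.choose t))
        = (10 * (N + 1) ^ K * (t + 1)) * N.choose t := by ring
      _ < 4 ^ t * N.choose t := by
          apply Nat.mul_lt_mul_of_lt_of_le hkey le_rfl
          omega
      _ ≤ 2 ^ N := hchoose
  -- conclude
  have hnat : 10 * Nat.card {F : (Fin r → Bool) → Bool // pdeg (1/10) F ≤ d} < 2 ^ (2^r) := by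
    have := Nat.mul_le_mul_left 10 hcount
    rw [← hN]
    omega
  have hcast : (10:ℝ) * (Nat.card {F : (Fin r → Bool) → Bool // pdeg (1/10) F ≤ d} : ℝ)
      < (2:ℝ) ^ (2^r) := by
    exact_mod_cast hnat
  linarith
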